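/- For densities p, q and the optimal discriminator D*(x) = p(x)/(p(x)+q(x)), the value ∫ p·log D* dμ + ∫ q·log(1−D*) dμ equals −2 log 2 + 2·JSD(p‖q); in particular it is minimized exactly when p = q a.e., with minimum value −2 log 2. -/

import Mathlib

open MeasureTheory Real

lemma aux_le (a m : ℝ) (ha : 0 ≤ a) (hm : 0 < m) : a - m ≤ a * Real.log (a / m) := by
  rcases ha.eq_or_lt with h | h
  · rw [← h]; simp; linarith
  · have hx : 0 < m / a := div_pos hm h
    have h1 := Real.log_le_sub_one_of_pos hx
    have h2 : Real.log (a / m) = - Real.log (m / a) := by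
      rw [← Real.log_inv, inv_div]
    rw [h2]
    have h3 : m / a * a = m := div_mul_cancel₀ m h.ne'
    nlinarith

lemma aux_lt (a m : ℝ) (ha : 0 ≤ a) (hm : 0 < m) (hne : a ≠ m) :
    a - m < a * Real.log (a / m) := by
  rcases ha.eq_or_lt with h | h
  · rw [← h]; simp; linarith
  · have hx : 0 < m / a := div_pos hm h
    have hx1 : m / a ≠ 1 := by
      intro hh
      exact hne (by field_simp at hh; linarith)
    have h1 := Real.log_lt_sub_one_of_pos hx hx1
    have h2 : Real.log (a / m) = - Real.log (m / a) := by
      rw [← Real.log_inv, inv_div]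
    rw [h2]
    have h3 : m / a * a = m := div_mul_cancel₀ m h.ne'
    nlinarith

lemma key_nonneg (a b : ℝ) (ha : 0 ≤ a) (hb : 0 ≤ b) (hab : 0 < a + b) :
    0 ≤ a * Real.log (a / ((a + b) / 2)) + b * Real.log (b / ((a + b) / 2)) := by
  have hm : 0 < (a + b) / 2 := by linarith
  have h1 := aux_le a _ ha hm
  have h2 := aux_le b _ hb hm
  linarith

lemma key_eq (a b : ℝ) (ha : 0 ≤ a) (hb : 0 ≤ b) (hab : 0 < a + b) :
    (a * Real.log (a / ((a + b) / 2)) + b * Real.log (b / ((a + b) / 2)) = 0) ↔ a = b := by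
  constructor
  · intro h
    by_contra hne
    have hm : 0 < (a + b) / 2 := by linarith
    have h1 := aux_lt a _ ha hm (fun hh => hne (by linarith))
    have h2 := aux_lt b _ hb hm (fun hh => hne (by linarith))
    linarith
  · intro h
    subst h
    have h0 : 0 < a := by linarith
    have : (a + a) / 2 = a := by ring
    rw [this, div_self h0.ne', Real.log_one]
    ring

/-- For the optimal discriminator `D* = p/(p+q)`, the GAN value
`∫ p log D* + ∫ q log (1 - D*)` equals `-2 log 2 + 2·JSD(p‖q)`; in particular
it is minimized exactly when `p = q` a.e., with minimum value `-2 log 2`. -/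
theorem optimal_discriminator_value {χ : Type*} [MeasurableSpace χ] (μ : Measure χ)
    (p q : χ → ℝ)
    (hp_meas : Measurable p) (hq_meas : Measurable q)
    (hp_nonneg : ∀ x, 0 ≤ p x) (hq_nonneg : ∀ x, 0 ≤ q x)
    (hp_int : Integrable p μ) (hq_int : Integrable q μ)
    (hp_one : ∫ x, p x ∂μ = 1) (hq_one : ∫ x, q x ∂μ = 1)
    (h_pos : ∀ᵐ x ∂μ, 0 < p x + q x)
    (h1 : Integrable (fun x => p x * Real.log (p x / (p x + q x))) μ)
    (h2 : Integrable (fun x => q x * Real.log (1 - p x / (p x + q x))) μ) :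
    (∫ x, p x * Real.log (p x / (p x + q x)) ∂μ +
       ∫ x, q x * Real.log (1 - p x / (p x + q x)) ∂μ =
     -2 * Real.log 2 +
       2 * ((1 / 2) * ∫ x, p x * Real.log (p x / ((p x + q x) / 2)) ∂μ +
            (1 / 2) * ∫ x, q x * Real.log (q x / ((p x + q x) / 2)) ∂μ)) ∧
    (-2 * Real.log 2 ≤ ∫ x, p x * Real.log (p x / (p x + q x)) ∂μ +
        ∫ x, q x * Real.log (1 - p x / (p x + q x)) ∂μ) ∧
    ((∫ x, p x * Real.log (p x / (p x + q x)) ∂μ +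
        ∫ x, q x * Real.log (1 - p x / (p x + q x)) ∂μ = -2 * Real.log 2) ↔
      p =ᵐ[μ] q) := by
  have Ip2 : Integrable (fun x => p x * Real.log 2) μ := hp_int.mul_const _
  have Iq2 : Integrable (fun x => q x * Real.log 2) μ := hq_int.mul_const _
  -- E1 : g1 = f1 + p * log 2 a.e.
  have E1 : ∀ᵐ x ∂μ, p x * Real.log (p x / ((p x + q x) / 2)) =
      p x * Real.log (p x / (p x + q x)) + p x * Real.log 2 := by
    filter_upwards [h_pos] with x hx
    by_cases hp : p x = 0
    · simp [hp]
    · have hp' : 0 < p x := (hp_nonneg x).lt_of_ne (Ne.symm hp)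
      have key : p x / ((p x + q x) / 2) = p x / (p x + q x) * 2 := by
        field_simp
      rw [key, Real.log_mul (div_ne_zero hp hx.ne') (by norm_num)]
      ring
  -- E2 : f2 = q * log (q/(p+q)) a.e.
  have E2 : ∀ᵐ x ∂μ, q x * Real.log (1 - p x / (p x + q x)) =
      q x * Real.log (q x / (p x + q x)) := by
    filter_upwards [h_pos] with x hx
    have : 1 - p x / (p x + q x) = q x / (p x + q x) := by
      field_simp
      ring
    rw [this]
  -- E3 : g2 = q * log (q/(p+q)) + q * log 2 a.e.
  have E3 : ∀ᵐ x ∂μ, q x * Real.log (q x / ((p x + q x) / 2)) =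
      q x * Real.log (q x / (p x + q x)) + q x * Real.log 2 := by
    filter_upwards [h_pos] with x hx
    by_cases hq : q x = 0
    · simp [hq]
    · have hq' : 0 < q x := (hq_nonneg x).lt_of_ne (Ne.symm hq)
      have key : q x / ((p x + q x) / 2) = q x / (p x + q x) * 2 := by
        field_simp
      rw [key, Real.log_mul (div_ne_zero hq hx.ne') (by norm_num)]
      ring
  have If2' : Integrable (fun x => q x * Real.log (q x / (p x + q x))) μ := h2.congr E2
  have Ig1 : Integrable (fun x => p x * Real.log (p x / ((p x + q x) / 2))) μ :=
    (h1.add Ip2).congr (E1.mono fun x hx => hx.symm)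
  have Ig2 : Integrable (fun x => q x * Real.log (q x / ((p x + q x) / 2))) μ :=
    (If2'.add Iq2).congr (E3.mono fun x hx => hx.symm)
  have hplog2 : ∫ x, p x * Real.log 2 ∂μ = Real.log 2 := by
    rw [integral_mul_const, hp_one, one_mul]
  have hqlog2 : ∫ x, q x * Real.log 2 ∂μ = Real.log 2 := by
    rw [integral_mul_const, hq_one, one_mul]
  have hI1 : ∫ x, p x * Real.log (p x / ((p x + q x) / 2)) ∂μ =
      (∫ x, p x * Real.log (p x / (p x + q x)) ∂μ) + Real.log 2 := by
    rw [integral_congr_ae E1, integral_add h1 Ip2, hplog2]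
  have hI2 : ∫ x, q x * Real.log (1 - p x / (p x + q x)) ∂μ =
      ∫ x, q x * Real.log (q x / (p x + q x)) ∂μ := integral_congr_ae E2
  have hI3 : ∫ x, q x * Real.log (q x / ((p x + q x) / 2)) ∂μ =
      (∫ x, q x * Real.log (q x / (p x + q x)) ∂μ) + Real.log 2 := by
    rw [integral_congr_ae E3, integral_add If2' Iq2, hqlog2]
  have hsum : ∫ x, (p x * Real.log (p x / ((p x + q x) / 2)) +
      q x * Real.log (q x / ((p x + q x) / 2))) ∂μ =
      (∫ x, p x * Real.log (p x / ((p x + q x) / 2)) ∂μ) +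
      (∫ x, q x * Real.log (q x / ((p x + q x) / 2)) ∂μ) := integral_add Ig1 Ig2
  have hGnonneg : 0 ≤ᵐ[μ] fun x => p x * Real.log (p x / ((p x + q x) / 2)) +
      q x * Real.log (q x / ((p x + q x) / 2)) :=
    h_pos.mono fun x hx => key_nonneg _ _ (hp_nonneg x) (hq_nonneg x) hx
  have hG : 0 ≤ ∫ x, (p x * Real.log (p x / ((p x + q x) / 2)) +
      q x * Real.log (q x / ((p x + q x) / 2))) ∂μ := integral_nonneg_of_ae hGnonneg
  refine ⟨by rw [hI1, hI2, hI3]; ring, by linarith, ?_, ?_⟩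
  · intro h
    have hzero : ∫ x, (p x * Real.log (p x / ((p x + q x) / 2)) +
        q x * Real.log (q x / ((p x + q x) / 2))) ∂μ = 0 := by linarith
    have hae := (integral_eq_zero_iff_of_nonneg_ae hGnonneg (Ig1.add Ig2)).mp hzero
    filter_upwards [hae, h_pos] with x hx hpos
    exact (key_eq _ _ (hp_nonneg x) (hq_nonneg x) hpos).mp hx
  · intro h
    have hz : (fun x => p x * Real.log (p x / ((p x + q x) / 2)) +
        q x * Real.log (q x / ((p x + q x) / 2))) =ᵐ[μ] 0 := by
      filter_upwards [h, h_pos] with x hx hpos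
      exact (key_eq _ _ (hp_nonneg x) (hq_nonneg x) hpos).mpr hx
    have hzz : ∫ x, (p x * Real.log (p x / ((p x + q x) / 2)) +
        q x * Real.log (q x / ((p x + q x) / 2))) ∂μ = 0 := by
      rw [integral_congr_ae hz]; simp
    linarith
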